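/- Let k be a field, V a k-vector space of dimension n with basis v_1,...,v_n, and set v_{n+1} := -v_1 - ... - v_n. Let a ∈ k be nonzero and let τ be a permutation of {1,...,n+1}. Define the k-linear map f: V → V by f(v_i) = a·v_{τ(i)} for i = 1,...,n (where v_{τ(i)} is interpreted via the relation above when τ(i) = n+1). Then the reversed characteristic polynomial of f equals (1/(1-aT)) · ∏_i (1 - (aT)^{d_i}), where {d_i} are the lengths of the cycles in the cycle decomposition of τ. -/

import Mathlib

open Polynomial

section AuxPermDet

set_option linter.unusedSectionVars false

open Matrix

variable {β : Type*} [Fintype β] [DecidableEq β] {R : Type*} [CommRing R]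

lemma permMatrix_apply' (σ : Equiv.Perm β) (i j : β) :
    (σ.permMatrix R) i j = if σ i = j then 1 else 0 := by
  simp [Equiv.Perm.permMatrix, PEquiv.toMatrix_apply, Equiv.toPEquiv_apply, Option.some_inj,
    Equiv.toPEquiv]

lemma cycle_det (t : R) (c : Equiv.Perm β) (hc : c.IsCycle) :
    Matrix.det (1 - t • c.permMatrix R) =
      (1 - t ^ c.support.card) * (1 - t) ^ (Fintype.card β - c.support.card) := by
  classical
  set M : Matrix β β R := 1 - t • c.permMatrix R with hM
  have entry : ∀ i j, M i j = (if i = j then 1 else 0) - t * (if c i = j then 1 else 0) := by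
    intro i j
    by_cases h : c i = j
    · simp [hM, Matrix.sub_apply, Matrix.one_apply, Matrix.smul_apply, permMatrix_apply',
        Equiv.toPEquiv_apply, h]
    · simp [hM, Matrix.sub_apply, Matrix.one_apply, Matrix.smul_apply, permMatrix_apply',
        Equiv.toPEquiv_apply, h]
  have hne : c ≠ 1 := hc.ne_one
  have h1ne : (1 : Equiv.Perm β) ≠ c⁻¹ := by
    intro h; exact hne (by rw [← inv_inv c, ← h, inv_one])
  have hvanish : ∀ π : Equiv.Perm β, π ≠ 1 → π ≠ c⁻¹ → ∏ i, M (π i) i = 0 := by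
    intro π hπ1 hπc
    by_contra hprod
    have H : ∀ i, π i = i ∨ π i = c⁻¹ i := by
      intro i
      by_contra hcon
      push_neg at hcon
      apply hprod
      apply Finset.prod_eq_zero (Finset.mem_univ i)
      rw [entry]
      have h1 : π i ≠ i := hcon.1
      have h2 : c (π i) ≠ i := by
        intro h
        exact hcon.2 (c.injective (by rw [h]; simp))
      rw [if_neg h1, if_neg h2]; ring
    apply hπc
    obtain ⟨x, hx⟩ : ∃ x, π x ≠ x := by
      by_contra hall; push_neg at hall; exact hπ1 (Equiv.ext hall)
    have hxc : π x = c⁻¹ x := (H x).resolve_left hx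
    have hcx : c⁻¹ x ≠ x := by rw [← hxc]; exact hx
    have key : ∀ m : ℕ, π ((c⁻¹ ^ m) x) = c⁻¹ ((c⁻¹ ^ m) x) ∧ c⁻¹ ((c⁻¹ ^ m) x) ≠ (c⁻¹ ^ m) x := by
      intro m
      induction m with
      | zero => simpa using ⟨hxc, hcx⟩
      | succ m ih =>
        obtain ⟨ih1, ih2⟩ := ih
        set y := (c⁻¹ ^ m) x with hy
        have hstep : (c⁻¹ ^ (m + 1)) x = c⁻¹ y := by
          rw [pow_succ']; rfl
        rw [hstep]
        have hπy : π (c⁻¹ y) = c⁻¹ (c⁻¹ y) := by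
          rcases H (c⁻¹ y) with h | h
          · exfalso
            rw [← ih1] at h
            have h2 := π.injective h
            rw [ih1] at h2
            exact ih2 h2
          · exact h
        refine ⟨hπy, ?_⟩
        intro h
        exact ih2 ((Equiv.injective c⁻¹) h)
    apply Equiv.ext
    intro z
    by_cases hz : c z = z
    · have hz' : c⁻¹ z = z := by
        rw [Equiv.Perm.inv_eq_iff_eq]; exact hz.symm
      rcases H z with h | h
      · rw [h, hz']
      · exact h
    · have hcinv : (c⁻¹).IsCycle := hc.inv
      have hz2 : c⁻¹ z ≠ z := by
        intro h
        apply hz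
        rw [Equiv.Perm.inv_eq_iff_eq] at h
        exact h.symm
      have hx2 : c⁻¹ x ≠ x := hcx
      obtain ⟨k, hk⟩ := hcinv.exists_pow_eq hx2 hz2
      rw [← hk]
      exact (key k).1
  have hfixcard : (Finset.univ.filter (fun i => c i = i)).card = Fintype.card β - c.support.card := by
    have h1 := Finset.card_filter_add_card_filter_not (s := Finset.univ) (fun i => c i = i)
    have h2 : (Finset.univ.filter (fun i => ¬ c i = i)).card = c.support.card := by
      congr 1
    simp only [Finset.card_univ] at h1
    omega
  have term1 : ∏ i, M ((1 : Equiv.Perm β) i) i = (1 - t) ^ (Fintype.card β - c.support.card) := by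
    simp only [Equiv.Perm.one_apply]
    have : ∀ i, M i i = if c i = i then 1 - t else 1 := by
      intro i
      rw [entry, if_pos rfl]
      by_cases h : c i = i <;> simp [h]
    rw [Finset.prod_congr rfl (fun i _ => this i)]
    rw [Finset.prod_ite, Finset.prod_const, Finset.prod_const, one_pow, mul_one, hfixcard]
  have term2 : ∏ i, M (c⁻¹ i) i = (-t) ^ c.support.card * (1 - t) ^ (Fintype.card β - c.support.card) := by
    have : ∀ i, M (c⁻¹ i) i = if c i = i then 1 - t else -t := by
      intro i
      rw [entry]
      have h1 : c (c⁻¹ i) = i := by simp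
      rw [if_pos h1]
      by_cases h : c i = i
      · have h' : c⁻¹ i = i := by rw [Equiv.Perm.inv_eq_iff_eq]; exact h.symm
        simp [h, h']
      · have h' : ¬ c⁻¹ i = i := by
          intro hh; apply h; rw [Equiv.Perm.inv_eq_iff_eq] at hh; exact hh.symm
        simp [h, h']; exact fun hh => absurd hh h'
    rw [Finset.prod_congr rfl (fun i _ => this i)]
    rw [Finset.prod_ite, Finset.prod_const, Finset.prod_const, hfixcard]
    have h2 : (Finset.univ.filter (fun i => ¬ c i = i)).card = c.support.card := by congr 1
    rw [h2]; ring
  rw [Matrix.det_apply']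
  rw [← Finset.sum_subset (Finset.subset_univ ({1, c⁻¹} : Finset (Equiv.Perm β)))
    (fun π _ hπ => by
      simp only [Finset.mem_insert, Finset.mem_singleton] at hπ
      push_neg at hπ
      rw [hvanish π hπ.1 hπ.2, mul_zero])]
  rw [Finset.sum_pair h1ne]
  rw [term1, term2]
  have hsign1 : ((Equiv.Perm.sign (1 : Equiv.Perm β) : ℤ) : R) = 1 := by simp
  have hsignc : ((Equiv.Perm.sign (c⁻¹ : Equiv.Perm β) : ℤ) : R) = -(-1) ^ c.support.card := by
    rw [Equiv.Perm.sign_inv, hc.sign]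
    push_cast
    ring
  rw [hsign1, hsignc]
  have h2 : ((-1 : R)) ^ (c.support.card * 2) = 1 := by
    rw [pow_mul', neg_one_sq, one_pow]
  ring_nf
  rw [h2]
  ring

lemma subtypePerm_isCycle (c : Equiv.Perm β) (hc : c.IsCycle) (p : β → Prop)
    (hinv : ∀ x, p x ↔ p (c x)) (hp : ∀ i, c i ≠ i → p i) :
    (c.subtypePerm (fun x => (hinv x).symm)).IsCycle := by
  have hc' := hc
  obtain ⟨x, hx, -⟩ := hc'
  refine ⟨⟨x, hp x hx⟩, ?_, ?_⟩
  · intro h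
    rw [Subtype.ext_iff] at h
    exact hx h
  · rintro ⟨y, hy⟩ hy2
    have hy3 : c y ≠ y := by
      intro h
      apply hy2
      rw [Subtype.ext_iff]
      exact h
    obtain ⟨k, hk⟩ := hc.exists_pow_eq hx hy3
    refine ⟨(k : ℤ), ?_⟩
    rw [zpow_natCast, Equiv.Perm.subtypePerm_pow]
    rw [Subtype.ext_iff]
    exact hk

lemma subtypePerm_support_card (σ : Equiv.Perm β) (p : β → Prop) [DecidablePred p]
    (hinv : ∀ x, p x ↔ p (σ x)) (hp : ∀ i, σ i ≠ i → p i) :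
    (σ.subtypePerm (fun x => (hinv x).symm)).support.card = σ.support.card := by
  apply Finset.card_bij (fun (x : {a // p a}) _ => x.val)
  · rintro ⟨a, ha⟩ h
    simp only [Equiv.Perm.mem_support] at h ⊢
    intro hh
    apply h
    rw [Subtype.ext_iff, Equiv.Perm.subtypePerm_apply]
    exact hh
  · rintro ⟨a, ha⟩ _ ⟨b, hb⟩ _ h
    exact Subtype.ext h
  · intro b hb
    rw [Equiv.Perm.mem_support] at hb
    refine ⟨⟨b, hp b hb⟩, ?_, rfl⟩
    simp only [Equiv.Perm.mem_support]
    intro hh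
    rw [Subtype.ext_iff, Equiv.Perm.subtypePerm_apply] at hh
    exact hb hh

lemma toSBP_eq (σ : Equiv.Perm β) (t : R) (p : β → Prop) [DecidablePred p]
    (hinv : ∀ x, p x ↔ p (σ x)) :
    (1 - t • σ.permMatrix R).toSquareBlockProp p =
      1 - t • (σ.subtypePerm (fun x => (hinv x).symm)).permMatrix R := by
  ext ⟨i, hi⟩ ⟨j, hj⟩
  simp only [Matrix.toSquareBlockProp, Matrix.of_apply, Matrix.sub_apply, Matrix.one_apply,
    Matrix.smul_apply, permMatrix_apply', smul_eq_mul]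
  have hcond : (σ.subtypePerm (fun x => (hinv x).symm) ⟨i, hi⟩ = ⟨j, hj⟩) ↔ (σ i = j) := by
    rw [Subtype.ext_iff, Equiv.Perm.subtypePerm_apply]
  have hcond2 : ((⟨i, hi⟩ : {a // p a}) = ⟨j, hj⟩) ↔ (i = j) := Subtype.ext_iff
  by_cases h1 : σ i = j <;> by_cases h2 : i = j <;>
    simp [h1, h2, hcond, hcond2, Equiv.toPEquiv_apply]

lemma one_sub_smul_perm_entry (t : R) (σ : Equiv.Perm β) (i j : β) :
    (1 - t • σ.permMatrix R) i j = (if i = j then 1 else 0) -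
      t * (if σ i = j then 1 else 0) := by
  by_cases h : σ i = j <;> by_cases h2 : i = j <;>
    simp [Matrix.sub_apply, Matrix.one_apply, Matrix.smul_apply, permMatrix_apply',
      Equiv.toPEquiv_apply, h, h2]

lemma card_subtype_any {p : β → Prop} [DecidablePred p] {inst : Fintype {x // p x}} :
    @Fintype.card {x // p x} inst = (Finset.univ.filter p).card := by
  rw [Subsingleton.elim inst (Subtype.fintype p)]
  convert Fintype.card_subtype p

lemma perm_det_key (t : R) (σ : Equiv.Perm β) :
    ∀ (p : β → Prop) [DecidablePred p], (∀ i, σ i ≠ i → p i) →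
    ((1 - t • σ.permMatrix R).toSquareBlockProp p).det =
      (∏ c ∈ σ.cycleFactorsFinset, (1 - t ^ c.support.card)) *
        (1 - t) ^ (Fintype.card {x // p x} - σ.support.card) := by
  induction σ using Equiv.Perm.cycle_induction_on with
  | base_one =>
    intro p _ hp
    have h1 : ((1 : Equiv.Perm β).permMatrix R) = 1 := by
      ext i j
      by_cases h : i = j <;>
        simp [permMatrix_apply', h, Matrix.one_apply, Equiv.toPEquiv_apply, Equiv.Perm.one_apply]
    rw [h1]
    have h2 : ((1 : Matrix β β R) - t • 1).toSquareBlockProp p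
        = (1 - t) • (1 : Matrix {x // p x} {x // p x} R) := by
      ext i j
      by_cases h : i = j <;>
        simp [Matrix.toSquareBlockProp, Matrix.one_apply, h, Subtype.ext_iff,
          Subtype.val_inj]
    rw [h2, Matrix.det_smul, Matrix.det_one, mul_one]
    simp
  | base_cycles c hc =>
    intro p _ hp
    have hp' : ∀ i, c i ≠ i → p i := hp
    have hinv : ∀ x, p x ↔ p (c x) := by
      intro x
      constructor
      · intro hx
        by_cases h : c x = x
        · rwa [h]
        · exact hp' _ (by intro hh; exact h (c.injective hh))
      · intro hx
        by_cases h : c x = x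
        · rwa [h] at hx
        · exact hp' x h
    rw [toSBP_eq c t p hinv, cycle_det t _ (subtypePerm_isCycle c hc p hinv hp'),
      subtypePerm_support_card c p hinv hp', hc.cycleFactorsFinset_eq_singleton,
      Finset.prod_singleton]
  | induction_disjoint σ π hd hσ ihσ ihπ =>
    intro p _ hp
    classical
    have hπfix : ∀ x, x ∈ σ.support → π x = x := by
      intro x hx
      rcases hd x with h | h
      · exact absurd h (Equiv.Perm.mem_support.mp hx)
      · exact h
    have hσfix : ∀ x, x ∈ π.support → σ x = x := by
      intro x hx
      rcases hd x with h | h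
      · exact h
      · exact absurd h (Equiv.Perm.mem_support.mp hx)
    have hmul1 : ∀ x, x ∈ σ.support → (σ * π) x = σ x := by
      intro x hx
      rw [Equiv.Perm.mul_apply, hπfix x hx]
    have hmul2 : ∀ x, x ∉ σ.support → (σ * π) x = π x := by
      intro x hx
      rw [Equiv.Perm.mul_apply]
      by_cases h : π x = x
      · rw [h]
        exact Equiv.Perm.notMem_support.mp hx
      · exact hσfix _ (Equiv.Perm.apply_mem_support.mpr (Equiv.Perm.mem_support.mpr h))
    have hmulnot : ∀ x, x ∉ σ.support → (σ * π) x ∉ σ.support := by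
      intro x hx
      rw [hmul2 x hx]
      by_cases h : π x = x
      · rwa [h]
      · have : π x ∈ π.support := Equiv.Perm.apply_mem_support.mpr
          (Equiv.Perm.mem_support.mpr h)
        exact fun hc => (Finset.disjoint_left.mp hd.disjoint_support hc) this
    have hpσ : ∀ i ∈ σ.support, p i := by
      intro i hi
      apply hp
      have : i ∈ (σ * π).support := by
        rw [hd.support_mul]; exact Finset.mem_union_left _ hi
      exact Equiv.Perm.mem_support.mp this
    have hpπ : ∀ i ∈ π.support, p i := by
      intro i hi
      apply hp
      have : i ∈ (σ * π).support := by
        rw [hd.support_mul]; exact Finset.mem_union_right _ hi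
      exact Equiv.Perm.mem_support.mp this
    set M : Matrix β β R := 1 - t • (σ * π).permMatrix R with hM
    have hMentry : ∀ i j, M i j = (if i = j then 1 else 0) -
        t * (if (σ * π) i = j then 1 else 0) := by
      intro i j
      rw [hM, one_sub_smul_perm_entry]
    set q : {a // p a} → Prop := fun x => (x : β) ∈ σ.support with hq
    have hzero : ∀ i, ¬ q i → ∀ j, q j → (M.toSquareBlockProp p) i j = 0 := by
      rintro ⟨i, hi⟩ hqi ⟨j, hj⟩ hqj
      simp only [hq] at hqi hqj
      have h1 : i ≠ j := fun h => hqi (h ▸ hqj)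
      have h2 : (σ * π) i ≠ j := by
        intro h
        exact hmulnot i hqi (h.symm ▸ hqj)
      show M i j = 0
      rw [hMentry, if_neg h1, if_neg h2]
      ring
    rw [Matrix.twoBlockTriangular_det _ q hzero]
    let e1 : {a // p a ∧ a ∈ σ.support} ≃ {x : {a // p a} // q x} :=
      ⟨fun x => ⟨⟨x.1, x.2.1⟩, x.2.2⟩, fun x => ⟨x.1.1, x.1.2, x.2⟩,
        fun _ => rfl, fun _ => rfl⟩
    let e2 : {a // p a ∧ a ∉ σ.support} ≃ {x : {a // p a} // ¬ q x} :=
      ⟨fun x => ⟨⟨x.1, x.2.1⟩, x.2.2⟩, fun x => ⟨x.1.1, x.1.2, x.2⟩,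
        fun _ => rfl, fun _ => rfl⟩
    have hdet1 : ((M.toSquareBlockProp p).toSquareBlockProp q).det
        = ∏ c ∈ σ.cycleFactorsFinset, (1 - t ^ c.support.card) := by
      rw [← Matrix.det_submatrix_equiv_self e1]
      have hAeq : ((M.toSquareBlockProp p).toSquareBlockProp q).submatrix e1 e1
          = (1 - t • σ.permMatrix R).toSquareBlockProp (fun a => p a ∧ a ∈ σ.support) := by
        ext i j
        show M i.val j.val = (1 - t • σ.permMatrix R) i.val j.val
        rw [hMentry, one_sub_smul_perm_entry, hmul1 _ i.2.2]
      rw [hAeq,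
        Matrix.equiv_block_det _ (fun a => ⟨fun h => ⟨hpσ a h, h⟩, fun h => h.2⟩),
        ihσ (fun a => a ∈ σ.support) (fun i hi => Equiv.Perm.mem_support.mpr hi)]
      rw [card_subtype_any]
      have hfm : Finset.univ.filter (fun a => a ∈ σ.support) = σ.support := by
        ext a; simp
      rw [hfm, Nat.sub_self, pow_zero, mul_one]
    have hdet2 : ((M.toSquareBlockProp p).toSquareBlockProp (fun i => ¬ q i)).det
        = (∏ c ∈ π.cycleFactorsFinset, (1 - t ^ c.support.card)) *
          (1 - t) ^ (Fintype.card {a // p a ∧ a ∉ σ.support} - π.support.card) := by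
      rw [← Matrix.det_submatrix_equiv_self e2]
      have hBeq : ((M.toSquareBlockProp p).toSquareBlockProp (fun i => ¬ q i)).submatrix e2 e2
          = (1 - t • π.permMatrix R).toSquareBlockProp (fun a => p a ∧ a ∉ σ.support) := by
        ext i j
        show M i.val j.val = (1 - t • π.permMatrix R) i.val j.val
        rw [hMentry, one_sub_smul_perm_entry, hmul2 _ i.2.2]
      rw [hBeq, ihπ (fun a => p a ∧ a ∉ σ.support)
        (fun i hi => ⟨hpπ i (Equiv.Perm.mem_support.mpr hi),
          fun hc => Finset.disjoint_left.mp hd.disjoint_support hc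
            (Equiv.Perm.mem_support.mpr hi)⟩)]
    rw [hdet1, hdet2, hd.cycleFactorsFinset_mul_eq_union,
      Finset.prod_union hd.disjoint_cycleFactorsFinset, hd.support_mul,
      Finset.card_union_of_disjoint hd.disjoint_support,
      card_subtype_any, card_subtype_any]
    have hfσ : Finset.univ.filter (fun a => p a ∧ a ∈ σ.support) = σ.support := by
      ext a
      simp only [Finset.mem_filter, Finset.mem_univ, true_and]
      exact ⟨fun h => h.2, fun h => ⟨hpσ a h, h⟩⟩
    have hsplit := Finset.card_filter_add_card_filter_not
      (s := Finset.univ.filter p) (fun a => a ∈ σ.support)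
    rw [Finset.filter_filter, Finset.filter_filter, hfσ] at hsplit
    have hle : π.support.card ≤ (Finset.univ.filter (fun a => p a ∧ a ∉ σ.support)).card := by
      apply Finset.card_le_card
      intro a ha
      simp only [Finset.mem_filter, Finset.mem_univ, true_and]
      exact ⟨hpπ a ha, fun hc => Finset.disjoint_left.mp hd.disjoint_support hc ha⟩
    have hexp : (Finset.univ.filter p).card - (σ.support.card + π.support.card)
        = (Finset.univ.filter (fun a => p a ∧ a ∉ σ.support)).card - π.support.card := by
      omega
    rw [hexp]
    ring

lemma perm_det (t : R) (σ : Equiv.Perm β) :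
    Matrix.det (1 - t • σ.permMatrix R) =
      (∏ c ∈ σ.cycleFactorsFinset, (1 - t ^ c.support.card)) *
        (1 - t) ^ (Fintype.card β - σ.support.card) := by
  classical
  have h := perm_det_key t σ (fun _ => True) (fun _ _ => trivial)
  let e : β ≃ {x : β // True} :=
    ⟨fun x => ⟨x, trivial⟩, fun x => x.1, fun _ => rfl, fun _ => rfl⟩
  have heq : ((1 - t • σ.permMatrix R).toSquareBlockProp (fun _ => True)).submatrix e e
      = 1 - t • σ.permMatrix R := by
    ext i j
    rfl
  rw [← Matrix.det_submatrix_equiv_self e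
    ((1 - t • σ.permMatrix R).toSquareBlockProp (fun _ => True)), heq,
    card_subtype_any] at h
  simp only [Finset.filter_true, Finset.card_univ] at h
  exact h

lemma charpoly_similar (P Pinv M : Matrix β β R) (h1 : P * Pinv = 1) :
    (P * M * Pinv).charpoly = M.charpoly := by
  have hmapmul : ∀ (A B : Matrix β β R), (A * B).map (C : R →+* R[X]) = A.map C * B.map C :=
    fun A B => Matrix.map_mul
  have hmapone : (1 : Matrix β β R).map (C : R →+* R[X]) = 1 :=
    Matrix.map_one _ (map_zero _) (map_one _)
  have hch : Matrix.charmatrix (P * M * Pinv) = P.map C * Matrix.charmatrix M * Pinv.map C := by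
    simp only [Matrix.charmatrix, RingHom.mapMatrix_apply]
    rw [Matrix.mul_sub, Matrix.sub_mul]
    congr 1
    · rw [← (Matrix.scalar_commute (X : R[X]) (fun r' => Commute.all _ _) (P.map C)).eq,
        Matrix.mul_assoc, ← hmapmul, h1, hmapone, Matrix.mul_one]
    · rw [hmapmul, hmapmul]
  unfold Matrix.charpoly
  rw [hch, Matrix.det_mul, Matrix.det_mul]
  have hdet1 : Matrix.det (P.map (C : R →+* R[X])) * Matrix.det (Pinv.map C) = 1 := by
    rw [← Matrix.det_mul, ← hmapmul, h1, hmapone, Matrix.det_one]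
  linear_combination Matrix.det (Matrix.charmatrix M) * hdet1

end AuxPermDet

/-- Let `k` be a field, `V = Fin n → k` an `n`-dimensional `k`-vector space with basis
`v 1, …, v n` (the standard basis), and set `v (n+1) := -v 1 - ⋯ - v n`. Let `a ≠ 0` and
`τ` a permutation of `{1, …, n+1}`. If `f : V →ₗ[k] V` satisfies `f (v i) = a • v (τ i)`
for `i = 1, …, n`, then the reversed characteristic polynomial of `f` equals
`(1/(1 - aT)) * ∏ (1 - (aT)^d)` over the cycle lengths `d` of `τ` (fixed points
contributing cycles of length 1). -/
theorem stmt_0 (n : ℕ) (k : Type*) [Field k] (a : k) (ha : a ≠ 0)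
    (τ : Equiv.Perm (Fin (n + 1)))
    (v : Fin (n + 1) → (Fin n → k))
    (hv : ∀ i : Fin n, v i.castSucc = Pi.single i (1 : k))
    (hlast : v (Fin.last n) = -∑ i : Fin n, Pi.single i (1 : k))
    (f : (Fin n → k) →ₗ[k] (Fin n → k))
    (hf : ∀ i : Fin n, f (v i.castSucc) = a • v (τ i.castSucc)) :
    (1 - C a * X) * (LinearMap.charpoly f).reverse =
      (∏ c ∈ τ.cycleFactorsFinset, (1 - (C a * X) ^ c.support.card)) *
        (1 - C a * X) ^ (n + 1 - τ.support.card) := by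
  classical
  set A := LinearMap.toMatrix' f with hA
  have hAcol : ∀ r i : Fin n, A r i = a * v (τ i.castSucc) r := by
    intro r i
    rw [hA, LinearMap.toMatrix'_apply]
    have hsingle : (fun j' : Fin n => if j' = i then (1:k) else 0) = Pi.single i 1 := by
      ext j'
      rw [Pi.single_apply]
    rw [← hv i, hf i]
    simp
  have hcs : ∀ r : Fin n, (r.castSucc : Fin (n+1)) ≠ Fin.last n :=
    fun r => (Fin.castSucc_lt_last r).ne
  set B : Matrix (Fin (n+1)) (Fin (n+1)) k :=
    Matrix.of (fun i j => a * (if τ j = i then 1 else 0)) with hB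
  set P : Matrix (Fin (n+1)) (Fin (n+1)) k :=
    Matrix.of (fun i j => if j = Fin.last n then 1 else if i = j then 1 else 0) with hP
  set Pinv : Matrix (Fin (n+1)) (Fin (n+1)) k :=
    Matrix.of (fun i j => if j = Fin.last n then (if i = Fin.last n then 1 else -1)
      else if i = j then 1 else 0) with hPinv
  have hPlast : ∀ i, P i (Fin.last n) = 1 := by
    intro i
    simp [hP]
  have hPinv_last : ∀ l, Pinv l (Fin.last n) = if l = Fin.last n then 1 else -1 := by
    intro l
    simp [hPinv]
  have hP_cs : ∀ (i : Fin (n+1)) (r : Fin n), P i r.castSucc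
      = if i = r.castSucc then 1 else 0 := by
    intro i r
    simp only [hP, Matrix.of_apply, if_neg (hcs r)]
  have hPPi : P * Pinv = 1 := by
    ext i j
    rw [Matrix.mul_apply]
    refine Fin.lastCases ?_ ?_ j
    · rw [Fin.sum_univ_castSucc]
      rw [Finset.sum_congr rfl (fun r _ => by
        rw [hPinv_last, if_neg (hcs r), hP_cs]),
        hPlast i, hPinv_last, if_pos rfl, mul_one]
      refine Fin.lastCases ?_ ?_ i
      · rw [Finset.sum_congr rfl (fun r _ => by
          rw [if_neg (fun h : Fin.last n = r.castSucc => (hcs r) h.symm), zero_mul])]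
        simp
      · intro i'
        have hsum : ∑ r : Fin n, (if (i'.castSucc : Fin (n+1)) = r.castSucc then (1:k) else 0)
            * (-1) = -1 := by
          have heach : ∀ r : Fin n,
              (if (i'.castSucc : Fin (n+1)) = r.castSucc then (1:k) else 0) * (-1)
              = if r = i' then -1 else 0 := by
            intro r
            by_cases h : r = i'
            · subst h; simp
            · rw [if_neg (fun hh => h (Fin.castSucc_injective n hh.symm)), if_neg h, zero_mul]
          rw [Finset.sum_congr rfl (fun r _ => heach r),
            Finset.sum_ite_eq' Finset.univ i' (fun _ => (-1:k)), if_pos (Finset.mem_univ _)]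
        rw [hsum, Matrix.one_apply_ne (hcs i')]
        ring
    · intro j'
      have heach : ∀ l, P i l * Pinv l j'.castSucc = if l = j'.castSucc then P i l else 0 := by
        intro l
        simp only [hPinv, Matrix.of_apply, if_neg (hcs j')]
        by_cases h : l = j'.castSucc
        · rw [if_pos h, if_pos h, mul_one]
        · rw [if_neg h, if_neg h, mul_zero]
      rw [Finset.sum_congr rfl (fun l _ => heach l),
        Finset.sum_ite_eq' Finset.univ j'.castSucc (fun l => P i l), if_pos (Finset.mem_univ _)]
      simp only [hP, Matrix.of_apply, if_neg (hcs j')]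
      by_cases h : i = j'.castSucc
      · rw [if_pos h, h, Matrix.one_apply_eq]
      · rw [if_neg h, Matrix.one_apply_ne h]
  set w : Matrix (Fin 1) (Fin n) k :=
    Matrix.of (fun _ j => a * (if τ j.castSucc = Fin.last n then 1 else 0)) with hw
  set d : Matrix (Fin 1) (Fin 1) k := Matrix.of (fun _ _ => a) with hd
  set Q' : Matrix (Fin (n+1)) (Fin (n+1)) k :=
    (Matrix.reindex finSumFinEquiv finSumFinEquiv) (Matrix.fromBlocks A 0 w d) with hQ'
  have hsymm1 : ∀ r : Fin n, finSumFinEquiv.symm (r.castSucc : Fin (n+1)) = Sum.inl r := by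
    intro r
    rw [show (r.castSucc : Fin (n+1)) = Fin.castAdd 1 r from rfl,
      finSumFinEquiv_symm_apply_castAdd]
  have hsymm2 : finSumFinEquiv.symm (Fin.last n) = Sum.inr 0 := by
    rw [show (Fin.last n : Fin (n+1)) = Fin.natAdd n 0 from (by ext; simp),
      finSumFinEquiv_symm_apply_natAdd]
  have hQ11 : ∀ (r s : Fin n), Q' r.castSucc s.castSucc = A r s := by
    intro r s
    simp [hQ', Matrix.reindex_apply, Matrix.submatrix_apply, hsymm1]
  have hQ12 : ∀ r : Fin n, Q' r.castSucc (Fin.last n) = 0 := by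
    intro r
    simp [hQ', Matrix.reindex_apply, Matrix.submatrix_apply, hsymm1, hsymm2]
  have hQ21 : ∀ s : Fin n, Q' (Fin.last n) s.castSucc
      = a * (if τ s.castSucc = Fin.last n then 1 else 0) := by
    intro s
    simp [hQ', Matrix.reindex_apply, Matrix.submatrix_apply, hsymm1, hsymm2, hw]
  have hQ22 : Q' (Fin.last n) (Fin.last n) = a := by
    simp [hQ', Matrix.reindex_apply, Matrix.submatrix_apply, hsymm2, hd]
  have hBrow : ∀ i, (∑ l, B i l) = a := by
    intro i
    have heach : ∀ l, B i l = if l = τ⁻¹ i then a else 0 := by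
      intro l
      rw [hB]
      simp only [Matrix.of_apply]
      by_cases h : τ l = i
      · rw [if_pos h, if_pos (by rw [Equiv.Perm.eq_inv_iff_eq]; exact h), mul_one]
      · rw [if_neg h, if_neg (fun hh => h (by rw [Equiv.Perm.eq_inv_iff_eq] at hh; exact hh)),
          mul_zero]
    rw [Finset.sum_congr rfl (fun l _ => heach l),
      Finset.sum_ite_eq' Finset.univ (τ⁻¹ i) (fun _ => a), if_pos (Finset.mem_univ _)]
  have hBP : B * P = P * Q' := by
    ext i j
    rw [Matrix.mul_apply, Matrix.mul_apply]
    refine Fin.lastCases ?_ ?_ j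
    · have hL : ∑ l, B i l * P l (Fin.last n) = a := by
        rw [Finset.sum_congr rfl (fun l _ => by rw [hPlast l, mul_one])]
        exact hBrow i
      rw [hL, Fin.sum_univ_castSucc,
        Finset.sum_congr rfl (fun r _ => by rw [hQ12 r, mul_zero]),
        hQ22, hPlast i]
      simp
    · intro j'
      have hL : ∑ l, B i l * P l j'.castSucc = a * (if τ j'.castSucc = i then 1 else 0) := by
        have heach : ∀ l, B i l * P l j'.castSucc = if l = j'.castSucc then B i l else 0 := by
          intro l
          simp only [hP, Matrix.of_apply, if_neg (hcs j')]
          by_cases h : l = j'.castSucc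
          · rw [if_pos h, if_pos h, mul_one]
          · rw [if_neg h, if_neg h, mul_zero]
        rw [Finset.sum_congr rfl (fun l _ => heach l),
          Finset.sum_ite_eq' Finset.univ j'.castSucc (fun l => B i l),
          if_pos (Finset.mem_univ _)]
        rfl
      rw [hL, Fin.sum_univ_castSucc, hPlast i, hQ21 j', one_mul]
      refine Fin.lastCases ?_ ?_ i
      · rw [Finset.sum_congr rfl (fun r _ => by
          rw [show P (Fin.last n) r.castSucc = 0 from by
            simp only [hP, Matrix.of_apply, if_neg (hcs r)]
            exact if_neg (fun h : Fin.last n = r.castSucc => (hcs r) h.symm), zero_mul])]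
        simp
      · intro i'
        have hsum : ∑ r : Fin n, P i'.castSucc r.castSucc * Q' r.castSucc j'.castSucc
            = A i' j' := by
          have heach : ∀ r : Fin n, P i'.castSucc r.castSucc * Q' r.castSucc j'.castSucc
              = if r = i' then A r j' else 0 := by
            intro r
            rw [hQ11 r j']
            simp only [hP, Matrix.of_apply, if_neg (hcs r)]
            by_cases h : r = i'
            · subst h; simp
            · rw [if_neg (fun hh : (i'.castSucc : Fin (n+1)) = r.castSucc =>
                h (Fin.castSucc_injective n hh.symm)), if_neg h, zero_mul]
          rw [Finset.sum_congr rfl (fun r _ => heach r),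
            Finset.sum_ite_eq' Finset.univ i' (fun r => A r j'), if_pos (Finset.mem_univ _)]
        rw [hsum]
        rcases Fin.eq_castSucc_or_eq_last (τ j'.castSucc) with ⟨m, hm⟩ | hm
        · rw [hm, hAcol i' j', hm, hv m]
          rw [if_neg (hcs m), Pi.single_apply]
          by_cases hmi : m = i'
          · subst hmi
            rw [if_pos rfl, if_pos rfl]
            ring
          · rw [if_neg (fun hh : (m.castSucc : Fin (n+1)) = i'.castSucc =>
              hmi (Fin.castSucc_injective n hh)),
              if_neg (fun hh => hmi hh.symm)]
            ring
        · rw [hm, hAcol i' j', hm, hlast]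
          rw [if_pos rfl, if_neg (fun h : (Fin.last n : Fin (n+1)) = i'.castSucc =>
            (hcs i') h.symm)]
          have hvl : (-∑ t : Fin n, Pi.single t (1:k)) i' = -1 := by
            rw [Pi.neg_apply, Finset.sum_apply]
            rw [Finset.sum_congr rfl (fun t _ => Pi.single_apply t (1:k) i'),
              Finset.sum_ite_eq Finset.univ i' (fun _ => (1:k)), if_pos (Finset.mem_univ _)]
          rw [hvl]
          ring
  have hBeq : B = P * Q' * Pinv := by
    rw [← hBP, Matrix.mul_assoc, hPPi, Matrix.mul_one]
  have hcharB : B.charpoly = A.charpoly * (X - C a) := by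
    rw [hBeq, charpoly_similar P Pinv Q' hPPi, hQ', Matrix.charpoly_reindex,
      Matrix.charpoly_fromBlocks_zero₁₂]
    congr 1
    rw [Matrix.charpoly, Matrix.det_fin_one, Matrix.charmatrix_apply_eq]
    rfl
  have hfA : LinearMap.charpoly f = A.charpoly := by
    rw [← LinearMap.charpoly_toMatrix f (Pi.basisFun k (Fin n)),
      LinearMap.toMatrix_eq_toMatrix', hA]
  have hrevXC : (X - C a : k[X]).reverse = 1 - C a * X := by
    rw [Polynomial.reverse, Polynomial.natDegree_X_sub_C, Polynomial.reflect_sub,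
      Polynomial.reflect_one_X, Polynomial.reflect_C, pow_one]
  have hrevB : B.charpoly.reverse = A.charpoly.reverse * (1 - C a * X) := by
    rw [hcharB, Polynomial.reverse_mul, hrevXC]
    rw [(Matrix.charpoly_monic A).leadingCoeff, (Polynomial.monic_X_sub_C a).leadingCoeff,
      one_mul]
    exact one_ne_zero
  have hident : (1 : Matrix (Fin (n+1)) (Fin (n+1)) k[X]) - (X : k[X]) • B.map C
      = Matrix.transpose (1 - (C a * X) • τ.permMatrix k[X]) := by
    ext i j
    rw [Matrix.transpose_apply]
    simp only [Matrix.sub_apply, Matrix.one_apply, Matrix.smul_apply, Matrix.map_apply, hB,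
      Matrix.of_apply, permMatrix_apply', Equiv.toPEquiv_apply, smul_eq_mul]
    by_cases h2 : i = j
    · subst h2
      by_cases h : τ i = i <;> simp [h] <;> ring
    · by_cases h : τ j = i <;> simp [h, h2, Ne.symm h2] <;> ring
  have hdetB : B.charpoly.reverse =
      (∏ c ∈ τ.cycleFactorsFinset, (1 - (C a * X) ^ c.support.card)) *
        (1 - C a * X) ^ (n + 1 - τ.support.card) := by
    rw [Matrix.reverse_charpoly]
    unfold Matrix.charpolyRev
    rw [hident, Matrix.det_transpose, perm_det (C a * X) τ]
    simp [Fintype.card_fin]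
  rw [hfA]
  calc (1 - C a * X) * (A.charpoly).reverse = A.charpoly.reverse * (1 - C a * X) := by ring
    _ = B.charpoly.reverse := hrevB.symm
    _ = _ := hdetB
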